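/- Let L₁, L₂ be compact regular frames and □ : L₁ → L₂ a frame homomorphism. Then the compatible subordination B(□) : BL₂ → BL₁ defined by b B(□) a iff b ≺ □a is functional: its dual satisfies B(□)~ ∘ B(□) ⊆ ≺ (on BL₂) and ≺ (on BL₁) ⊆ B(□) ∘ B(□)~. -/

import Mathlib

open Set

/-- Compact element of a complete lattice, with its definition as in Mathlib of December 2024. -/
def CompleteLattice.IsCompactElement {α : Type*} [CompleteLattice α] (k : α) :=
  ∀ s : Set α, k ≤ sSup s → ∃ t : Finset α, ↑t ⊆ s ∧ k ≤ t.sup id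

def pc {L : Type*} [Order.Frame L] (a : L) : L := sSup {x | a ⊓ x = ⊥}

section lemmas
variable {L : Type*} [Order.Frame L]

lemma inf_pc (a : L) : a ⊓ pc a = ⊥ := by
  rw [pc, inf_sSup_eq]
  simp only [iSup_eq_bot]
  intro x hx; simpa using hx

lemma le_pc {a b : L} (h : a ⊓ b = ⊥) : b ≤ pc a := le_sSup h

lemma pc_anti {a b : L} (h : a ≤ b) : pc b ≤ pc a :=
  sSup_le_sSup fun x hx => eq_bot_mono (inf_le_inf_right x h) hx

lemma le_pc_pc (a : L) : a ≤ pc (pc a) := le_pc (by rw [inf_comm]; exact inf_pc a)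

lemma pc_pc_pc (a : L) : pc (pc (pc a)) = pc a :=
  le_antisymm (pc_anti (le_pc_pc a)) (le_pc_pc (pc a))

lemma pc_sup (a b : L) : pc (a ⊔ b) = pc a ⊓ pc b := by
  apply le_antisymm
  · exact le_inf (pc_anti le_sup_left) (pc_anti le_sup_right)
  · apply le_pc
    rw [inf_sup_right]
    simp only [sup_eq_bot_iff]
    constructor
    · rw [← le_bot_iff, ← inf_pc a]; exact inf_le_inf_left a inf_le_left
    · rw [← le_bot_iff, ← inf_pc b]; exact inf_le_inf_left b inf_le_right
end lemmas
def wI {L : Type*} [Order.Frame L] (a b : L) : Prop := pc a ⊔ b = ⊤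

/-- The booleanization of a frame: the set of its regular elements `a = a**`. -/
def Bool' (L : Type*) [Order.Frame L] : Set L := {a | pc (pc a) = a}

/-- A frame is regular if every element is the join of the elements well inside it. -/
def IsRegularFrame (L : Type*) [Order.Frame L] : Prop :=
  ∀ a : L, a = sSup {x | wI x a}

/-- A preframe homomorphism preserves finite meets and directed joins. -/
def IsPreframeHom {L M : Type*} [Order.Frame L] [Order.Frame M] (f : L → M) : Prop :=
  f ⊤ = ⊤ ∧ (∀ a b : L, f (a ⊓ b) = f a ⊓ f b) ∧
    ∀ s : Set L, s.Nonempty → DirectedOn (· ≤ ·) s → f (sSup s) = sSup (f '' s)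

/-- A frame homomorphism preserves arbitrary joins and finite meets. -/
def IsFrameHom {L M : Type*} [Order.Frame L] [Order.Frame M] (f : L → M) : Prop :=
  f ⊤ = ⊤ ∧ (∀ a b : L, f (a ⊓ b) = f a ⊓ f b) ∧
    ∀ s : Set L, f (sSup s) = sSup (f '' s)

/-- for a frame homomorphism `□ : L₁ → L₂` between compact
regular frames, the compatible subordination `b B(□) a` iff `b ≺ □a` from the
booleanization of `L₂` to that of `L₁` is functional:
`B(□)~ ∘ B(□) ⊆ ≺` on `BL₂` and `≺` on `BL₁` is contained in `B(□) ∘ B(□)~`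
(complements in the booleanizations are pseudocomplements). -/
theorem stmt19 {L₁ L₂ : Type*} [Order.Frame L₁] [Order.Frame L₂]
    (hc₁ : CompleteLattice.IsCompactElement (⊤ : L₁)) (hr₁ : IsRegularFrame L₁)
    (hc₂ : CompleteLattice.IsCompactElement (⊤ : L₂)) (hr₂ : IsRegularFrame L₂)
    (box : L₁ → L₂) (hbox : IsFrameHom box) :
    (∀ b b' : L₂, b ∈ Bool' L₂ → b' ∈ Bool' L₂ →
      (∃ a ∈ Bool' L₁, wI b (box a) ∧ wI (pc b') (box (pc a))) → wI b b') ∧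
    (∀ a a' : L₁, a ∈ Bool' L₁ → a' ∈ Bool' L₁ → wI a a' →
      ∃ b ∈ Bool' L₂, wI (pc b) (box (pc a)) ∧ wI b (box a')) := by

  obtain ⟨hT, hM, hS⟩ := hbox
  have hbot : box ⊥ = ⊥ := by
    have := hS ∅; simpa using this
  have hsup : ∀ x y : L₁, box (x ⊔ y) = box x ⊔ box y := by
    intro x y
    have := hS {x, y}
    simpa [Set.image_pair] using this
  constructor
  · rintro b b' hb hb' ⟨a, ha, h1, h2⟩
    rw [wI] at h1 h2 ⊢
    rw [hb'] at h2
    have hkey : (pc b ⊔ box a) ⊓ (b' ⊔ box (pc a)) ≤ pc b ⊔ b' := by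
      rw [inf_sup_left, inf_sup_right, inf_sup_right]
      have h3 : box a ⊓ box (pc a) = ⊥ := by rw [← hM, inf_pc, hbot]
      refine sup_le (sup_le ?_ ?_) (sup_le ?_ ?_)
      · exact le_sup_of_le_left inf_le_left
      · exact le_sup_of_le_right inf_le_right
      · exact le_sup_of_le_left inf_le_left
      · rw [h3]; exact bot_le
    rw [h1, h2] at hkey
    simpa using hkey
  · intro a a' _ _ haa'
    -- find c with pc a ⊔ c = ⊤ and pc c ⊔ a' = ⊤
    have hdir : DirectedOn (· ≤ ·) ((fun x => pc a ⊔ x) '' {x | wI x a'}) := by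
      rintro _ ⟨x, hx, rfl⟩ _ ⟨y, hy, rfl⟩
      refine ⟨pc a ⊔ (x ⊔ y), ⟨x ⊔ y, ?_, rfl⟩, sup_le_sup_left le_sup_left _,
        sup_le_sup_left le_sup_right _⟩
      simp only [Set.mem_setOf_eq, wI] at hx hy ⊢
      rw [pc_sup, sup_inf_right, hx, hy, inf_idem]
    have hne : ((fun x => pc a ⊔ x) '' {x | wI x a'}).Nonempty := by
      refine ⟨pc a ⊔ ⊥, ⊥, ?_, rfl⟩
      have hpb : pc (⊥ : L₁) = ⊤ := top_le_iff.mp (le_pc (by simp))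
      simp [wI, hpb]
    have htop : (⊤ : L₁) ≤ sSup ((fun x => pc a ⊔ x) '' {x | wI x a'}) := by
      have : (⊤ : L₁) = pc a ⊔ sSup {x | wI x a'} := by rw [← hr₁ a', haa']
      rw [this]
      refine sup_le ?_ ?_
      · obtain ⟨_, ⟨x, hx, rfl⟩⟩ := hne
        exact le_trans le_sup_left (le_sSup ⟨x, hx, rfl⟩)
      · exact sSup_le fun x hx => le_trans le_sup_right (le_sSup ⟨x, hx, rfl⟩)
    obtain ⟨_, ⟨c, hc, rfl⟩, hct⟩ :=
      (CompleteLattice.isCompactElement_iff_le_of_directed_sSup_le L₁ ⊤).mp ((CompleteLattice.isCompactElement_iff_exists_le_sSup_of_le_sSup L₁ ⊤).mpr hc₁) _ hne hdir htop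
    have hcc : pc a ⊔ c = ⊤ := top_le_iff.mp hct
    refine ⟨pc (pc (box c)), ?_, ?_, ?_⟩
    · exact pc_pc_pc (pc (box c))
    · rw [wI, pc_pc_pc]
      have h1 : box c ⊔ box (pc a) = ⊤ := by rw [← hsup, sup_comm, hcc, hT]
      exact top_le_iff.mp (h1 ▸ sup_le_sup_right (le_pc_pc (box c)) _)
    · rw [wI, pc_pc_pc]
      have h1 : box (pc c) ⊔ box a' = ⊤ := by rw [← hsup, hc, hT]
      have h2 : box (pc c) ≤ pc (box c) := le_pc (by rw [← hM, inf_pc, hbot])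
      exact top_le_iff.mp (h1 ▸ sup_le_sup_right h2 _)
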